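/- Let A be a Banach algebra, and let X, Y be right Banach A-modules with X relatively injective (there is a contractive A-module map Φ⁺ : B(A⁺, X) → X with Φ⁺∘Δ⁺ = id_X). If Y is a right Banach A-module containing X as a closed submodule and there exists a contractive projection (not necessarily a module map) from Y onto X, combined with X being a 1-injective Banach space, then there exists a contractive A-module projection from any containing module Z onto X extending any contractive module map into X; in particular relative 1-injectivity plus 1-injectivity as a Banach space implies 1-injectivity as a Banach A-module. -/

import Mathlib

universe u

variable {A : Type*}

/-- The multiplication of the unitization `A⁺ = A ⊕₁ ℂ`, realized on `A × ℂ`. -/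
def umul [NonUnitalNormedRing A] [NormedSpace ℂ A] (x y : A × ℂ) : A × ℂ :=
  (x.1 * y.1 + x.2 • y.1 + y.2 • x.1, x.2 * y.2)

/-- The unitization `A⁺` with its ℓ¹-norm. -/
abbrev Aplus (A : Type*) [NonUnitalNormedRing A] := WithLp 1 (A × ℂ)

/-- A right Banach `A`-module structure on a Banach space `Y`: a bilinear,
associative, contractive action. -/
structure BanachRightModule (A : Type*) (Y : Type*) [NonUnitalNormedRing A]
    [NormedSpace ℂ A] [NormedAddCommGroup Y] [NormedSpace ℂ Y] where
  act : Y →ₗ[ℂ] A →ₗ[ℂ] Y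
  assoc : ∀ (y : Y) (a b : A), act (act y a) b = act y (a * b)
  bound : ∀ (y : Y) (a : A), ‖act y a‖ ≤ ‖y‖ * ‖a‖

theorem aplus_norm [NonUnitalNormedRing A] (u : Aplus A) :
    ‖u‖ = ‖(WithLp.equiv 1 (A × ℂ) u).1‖ + ‖(WithLp.equiv 1 (A × ℂ) u).2‖ := by
  rw [WithLp.prod_norm_eq_add (by norm_num)]
  norm_num

/-- The orbit map `u ↦ z·u` from `A⁺` to `Z`. -/
noncomputable def actPlus {Z : Type*} [NonUnitalNormedRing A] [NormedSpace ℂ A]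
    [NormedAddCommGroup Z] [NormedSpace ℂ Z] (MZ : BanachRightModule A Z) (z : Z) :
    Aplus A →L[ℂ] Z :=
  LinearMap.mkContinuous
    { toFun := fun u =>
        MZ.act z (WithLp.equiv 1 (A × ℂ) u).1 + (WithLp.equiv 1 (A × ℂ) u).2 • z
      map_add' := by
        intro u v
        simp only [WithLp.equiv_apply, WithLp.ofLp_add, Prod.fst_add, Prod.snd_add, map_add, add_smul]
        abel
      map_smul' := by
        intro c u
        simp only [WithLp.equiv_apply, WithLp.ofLp_smul, Prod.smul_fst, Prod.smul_snd, map_smul,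
          RingHom.id_apply, smul_add, smul_eq_mul, mul_smul] }
    ‖z‖ (by
      intro u
      simp only [LinearMap.coe_mk, AddHom.coe_mk]
      calc ‖MZ.act z (WithLp.equiv 1 (A × ℂ) u).1 + (WithLp.equiv 1 (A × ℂ) u).2 • z‖
          ≤ ‖MZ.act z (WithLp.equiv 1 (A × ℂ) u).1‖ + ‖(WithLp.equiv 1 (A × ℂ) u).2 • z‖ :=
            norm_add_le _ _
        _ ≤ ‖z‖ * ‖(WithLp.equiv 1 (A × ℂ) u).1‖ + ‖(WithLp.equiv 1 (A × ℂ) u).2‖ * ‖z‖ := by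
            gcongr
            · exact MZ.bound _ _
            · rw [norm_smul]
        _ = ‖z‖ * ‖u‖ := by rw [aplus_norm]; ring)

@[simp] theorem actPlus_apply {Z : Type*} [NonUnitalNormedRing A] [NormedSpace ℂ A]
    [NormedAddCommGroup Z] [NormedSpace ℂ Z] (MZ : BanachRightModule A Z) (z : Z)
    (u : Aplus A) :
    actPlus MZ z u =
      MZ.act z (WithLp.equiv 1 (A × ℂ) u).1 + (WithLp.equiv 1 (A × ℂ) u).2 • z := rfl

/-- if a right Banach `A`-module `X` is relatively 1-injective
(the canonical embedding `Δ⁺ : X → B(A⁺, X)` admits a contractive `A`-module left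
inverse) and `X` is 1-injective as a Banach space, then `X` is 1-injective as a
Banach `A`-module: every contractive module map into `X` extends, with the same
norm, along any isometric module inclusion. -/
theorem one_injective_module_of_relatively_injective
    [NonUnitalNormedRing A] [NormedSpace ℂ A] [IsScalarTower ℂ A A]
    [SMulCommClass ℂ A A] [CompleteSpace A]
    (X : Type u) [NormedAddCommGroup X] [NormedSpace ℂ X] [CompleteSpace X]
    (MX : BanachRightModule A X)
    -- relative 1-injectivity of `X`:
    (hrel : ∃ Φp : (Aplus A →L[ℂ] X) →L[ℂ] X,
      ‖Φp‖ ≤ 1 ∧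
      (∀ (Ψ Ψ' : Aplus A →L[ℂ] X) (a : A),
        (∀ u : Aplus A, Ψ' u =
            Ψ ((WithLp.equiv 1 (A × ℂ)).symm
              (umul (a, 0) (WithLp.equiv 1 (A × ℂ) u)))) →
        Φp Ψ' = MX.act (Φp Ψ) a) ∧
      (∀ (x : X) (D : Aplus A →L[ℂ] X),
        (∀ u : Aplus A, D u =
            MX.act x (WithLp.equiv 1 (A × ℂ) u).1 + (WithLp.equiv 1 (A × ℂ) u).2 • x) →
        Φp D = x))
    -- 1-injectivity of `X` as a Banach space:
    (hinj : ∀ (Y Z : Type u) [NormedAddCommGroup Y] [NormedSpace ℂ Y] [CompleteSpace Y]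
      [NormedAddCommGroup Z] [NormedSpace ℂ Z] [CompleteSpace Z]
      (j : Y →L[ℂ] Z), (∀ y, ‖j y‖ = ‖y‖) →
      ∀ T : Y →L[ℂ] X, ∃ T' : Z →L[ℂ] X, (∀ y, T' (j y) = T y) ∧ ‖T'‖ ≤ ‖T‖) :
    -- conclusion: 1-injectivity of `X` as a Banach `A`-module
    ∀ (Y Z : Type u) [NormedAddCommGroup Y] [NormedSpace ℂ Y] [CompleteSpace Y]
      [NormedAddCommGroup Z] [NormedSpace ℂ Z] [CompleteSpace Z]
      (MY : BanachRightModule A Y) (MZ : BanachRightModule A Z)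
      (j : Y →L[ℂ] Z), (∀ y, ‖j y‖ = ‖y‖) →
      (∀ (y : Y) (a : A), j (MY.act y a) = MZ.act (j y) a) →
      ∀ T : Y →L[ℂ] X, (∀ (y : Y) (a : A), T (MY.act y a) = MX.act (T y) a) →
      ∃ T' : Z →L[ℂ] X, (∀ y, T' (j y) = T y) ∧ ‖T'‖ ≤ ‖T‖ ∧
        (∀ (z : Z) (a : A), T' (MZ.act z a) = MX.act (T' z) a) := by
  
  obtain ⟨Φp, hΦnorm, hΦmod, hΦinv⟩ := hrel
  intro Y Z _ _ _ _ _ _ MY MZ j hj hjmod T hTmod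
  obtain ⟨S, hS1, hS2⟩ := hinj Y Z j hj T
  have hadd : ∀ z z' : Z, actPlus MZ (z + z') = actPlus MZ z + actPlus MZ z' := by
    intro z z'; ext u
    simp only [ContinuousLinearMap.add_apply, actPlus_apply, map_add,
      LinearMap.add_apply, add_smul, smul_add]
    abel
  have hsmul : ∀ (c : ℂ) (z : Z), actPlus MZ (c • z) = c • actPlus MZ z := by
    intro c z; ext u
    simp only [ContinuousLinearMap.smul_apply, actPlus_apply, map_smul,
      LinearMap.smul_apply, smul_add]
    rw [smul_comm]
  set Lam : Z →ₗ[ℂ] X :=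
    { toFun := fun z => Φp (S.comp (actPlus MZ z))
      map_add' := fun z z' => by
        simp only [hadd, ContinuousLinearMap.comp_add, map_add]
      map_smul' := fun c z => by
        simp only [hsmul, RingHom.id_apply, ContinuousLinearMap.comp_smul, map_smul] }
    with hLam
  have hbound : ∀ z : Z, ‖Lam z‖ ≤ ‖T‖ * ‖z‖ := by
    intro z
    have h1 : ‖actPlus MZ z‖ ≤ ‖z‖ :=
      LinearMap.mkContinuous_norm_le _ (norm_nonneg z) _
    calc ‖Φp (S.comp (actPlus MZ z))‖ ≤ ‖Φp‖ * ‖S.comp (actPlus MZ z)‖ :=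
          Φp.le_opNorm _
      _ ≤ ‖Φp‖ * (‖S‖ * ‖actPlus MZ z‖) := by
          gcongr; exact ContinuousLinearMap.opNorm_comp_le _ _
      _ ≤ 1 * (‖T‖ * ‖z‖) :=
          mul_le_mul hΦnorm
            (mul_le_mul hS2 h1 (norm_nonneg _) ((norm_nonneg S).trans hS2))
            (by positivity) zero_le_one
      _ = ‖T‖ * ‖z‖ := one_mul _
  refine ⟨Lam.mkContinuous ‖T‖ hbound, ?_, ?_, ?_⟩
  · intro y
    apply hΦinv (T y)
    intro u
    have h2 : actPlus MZ (j y) u =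
        j (MY.act y (WithLp.equiv 1 (A × ℂ) u).1 + (WithLp.equiv 1 (A × ℂ) u).2 • y) := by
      rw [actPlus_apply, map_add, hjmod, j.map_smul]
    rw [ContinuousLinearMap.comp_apply, h2, hS1, map_add, hTmod, T.map_smul]
  · exact Lam.mkContinuous_norm_le (norm_nonneg T) hbound
  · intro z a
    apply hΦmod (S.comp (actPlus MZ z))
    intro u
    simp only [ContinuousLinearMap.comp_apply, actPlus_apply, Equiv.apply_symm_apply, umul]
    congr 1
    rw [MZ.assoc]
    simp only [map_add, map_smul, zero_smul, zero_mul, add_zero]
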